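/- (Abstract form of Proposition 2.3 of the paper: existence of the logarithmic derivative / integration by parts density.) Let H be a real separable Hilbert space, let ν be a Borel probability measure on H, let h ∈ H and C ≥ 0. Assume that for every φ ∈ C¹_b(H) one has |∫_H ⟨Dφ(x), h⟩ ν(dx)| ≤ C ‖φ‖_{L²(ν)}. Then there exists v ∈ L²(H,ν) with ‖v‖_{L²(ν)} ≤ C such that for every φ ∈ C¹_b(H): ∫_H ⟨Dφ(x), h⟩ ν(dx) = ∫_H φ(x) v(x) ν(dx). -/

import Mathlib

open MeasureTheory
open scoped RealInnerProductSpace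

/-- `φ : H → ℝ` is of class `C¹_b` with gradient `Dφ : H → H`: `φ` is bounded,
Fréchet differentiable with gradient `Dφ`, and `Dφ` is bounded and continuous. -/
def IsC1b {H : Type*} [NormedAddCommGroup H] [InnerProductSpace ℝ H] [CompleteSpace H]
    (φ : H → ℝ) (Dφ : H → H) : Prop :=
  (∃ M : ℝ, ∀ x, |φ x| ≤ M) ∧ (∀ x, HasGradientAt φ (Dφ x) x) ∧
    Continuous Dφ ∧ (∃ M : ℝ, ∀ x, ‖Dφ x‖ ≤ M)

section Aux

variable {H : Type*} [NormedAddCommGroup H] [InnerProductSpace ℝ H] [CompleteSpace H]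

lemma isC1b_zero : IsC1b (0 : H → ℝ) (0 : H → H) :=
  ⟨⟨0, fun _ => by simp⟩, fun x => hasGradientAt_const x 0, continuous_const,
    ⟨0, fun _ => by simp⟩⟩

lemma IsC1b.add {φ₁ φ₂ : H → ℝ} {D₁ D₂ : H → H} (h₁ : IsC1b φ₁ D₁) (h₂ : IsC1b φ₂ D₂) :
    IsC1b (φ₁ + φ₂) (D₁ + D₂) := by
  obtain ⟨⟨M₁, hM₁⟩, hg₁, hc₁, ⟨N₁, hN₁⟩⟩ := h₁
  obtain ⟨⟨M₂, hM₂⟩, hg₂, hc₂, ⟨N₂, hN₂⟩⟩ := h₂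
  refine ⟨⟨M₁ + M₂, fun x => ?_⟩, fun x => ?_, hc₁.add hc₂, ⟨N₁ + N₂, fun x => ?_⟩⟩
  · exact (abs_add_le _ _).trans (add_le_add (hM₁ x) (hM₂ x))
  · rw [hasGradientAt_iff_hasFDerivAt]
    simpa [map_add] using ((hg₁ x).hasFDerivAt.add (hg₂ x).hasFDerivAt)
  · exact (norm_add_le _ _).trans (add_le_add (hN₁ x) (hN₂ x))

lemma IsC1b.smul {φ : H → ℝ} {D : H → H} (c : ℝ) (h : IsC1b φ D) :
    IsC1b (c • φ) (c • D) := by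
  obtain ⟨⟨M, hM⟩, hg, hc, ⟨N, hN⟩⟩ := h
  refine ⟨⟨|c| * M, fun x => ?_⟩, fun x => ?_, hc.const_smul c, ⟨|c| * N, fun x => ?_⟩⟩
  · simp only [Pi.smul_apply, smul_eq_mul, abs_mul]
    exact mul_le_mul_of_nonneg_left (hM x) (abs_nonneg c)
  · rw [hasGradientAt_iff_hasFDerivAt]
    simpa [_root_.map_smul] using ((hg x).hasFDerivAt.const_smul c)
  · simp only [Pi.smul_apply, norm_smul, Real.norm_eq_abs]
    exact mul_le_mul_of_nonneg_left (hN x) (abs_nonneg c)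

lemma IsC1b.continuous {φ : H → ℝ} {D : H → H} (h : IsC1b φ D) : Continuous φ :=
  continuous_iff_continuousAt.2 fun x => (h.2.1 x).continuousAt

end Aux

section Main

variable {H : Type*} [NormedAddCommGroup H] [InnerProductSpace ℝ H] [CompleteSpace H]
  [MeasurableSpace H] [BorelSpace H]
  (ν : Measure H) [IsProbabilityMeasure ν]

lemma IsC1b.memℒp {φ : H → ℝ} {D : H → H} (h : IsC1b φ D) : MemLp φ 2 ν := by
  obtain ⟨M, hM⟩ := h.1
  exact MemLp.of_bound h.continuous.aestronglyMeasurable M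
    (Filter.Eventually.of_forall fun x => by simpa using hM x)

lemma IsC1b.integrable_inner {φ : H → ℝ} {D : H → H} (h : IsC1b φ D) (v : H) :
    Integrable (fun x => ⟪D x, v⟫) ν := by
  obtain ⟨N, hN⟩ := h.2.2.2
  refine memLp_one_iff_integrable.mp <|
    MemLp.of_bound ((h.2.2.1.inner continuous_const).aestronglyMeasurable) (N * ‖v‖)
      (Filter.Eventually.of_forall fun x => ?_)
  calc ‖⟪D x, v⟫‖ ≤ ‖D x‖ * ‖v‖ := norm_inner_le_norm _ _
  _ ≤ N * ‖v‖ := mul_le_mul_of_nonneg_right (hN x) (norm_nonneg v)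

end Main

/-- **Abstract form of Proposition 2.3 of the paper: existence of the
logarithmic derivative / integration by parts density.** If
`|∫ ⟨Dφ, h⟩ dν| ≤ C ‖φ‖_{L²(ν)}` for all `φ ∈ C¹_b(H)`, then there exists
`v ∈ L²(H,ν)` with `‖v‖_{L²(ν)} ≤ C` such that
`∫ ⟨Dφ(x), h⟩ ν(dx) = ∫ φ(x) v(x) ν(dx)` for all `φ ∈ C¹_b(H)`. -/
theorem fomin_integration_by_parts
    {H : Type*} [NormedAddCommGroup H] [InnerProductSpace ℝ H] [CompleteSpace H]
    [SecondCountableTopology H] [MeasurableSpace H] [BorelSpace H]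
    (ν : Measure H) [IsProbabilityMeasure ν] (h : H) (C : ℝ) (hC : 0 ≤ C)
    (hbound : ∀ (φ : H → ℝ) (Dφ : H → H), IsC1b φ Dφ →
      |∫ x, ⟪Dφ x, h⟫ ∂ν| ≤ C * Real.sqrt (∫ x, φ x ^ 2 ∂ν)) :
    ∃ v : H → ℝ, MemLp v 2 ν ∧ Real.sqrt (∫ x, v x ^ 2 ∂ν) ≤ C ∧
      ∀ (φ : H → ℝ) (Dφ : H → H), IsC1b φ Dφ →
        ∫ x, ⟪Dφ x, h⟫ ∂ν = ∫ x, φ x * v x ∂ν := by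
  classical
  set E := Lp ℝ 2 ν
  -- norm of an Lp element as sqrt of integral of square
  have hnorm : ∀ f : E, ‖f‖ = Real.sqrt (∫ x, (f : H → ℝ) x ^ 2 ∂ν) := by
    intro f
    rw [norm_eq_sqrt_real_inner, L2.inner_def]
    congr 1
    refine integral_congr_ae (Filter.Eventually.of_forall fun x => ?_)
    simp [RCLike.inner_apply, sq]
  -- well-definedness: the integral depends only on the a.e. class of φ
  have hkey : ∀ (φ₁ : H → ℝ) (D₁ : H → H) (φ₂ : H → ℝ) (D₂ : H → H),
      IsC1b φ₁ D₁ → IsC1b φ₂ D₂ → φ₁ =ᵐ[ν] φ₂ →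
      ∫ x, ⟪D₁ x, h⟫ ∂ν = ∫ x, ⟪D₂ x, h⟫ ∂ν := by
    intro φ₁ D₁ φ₂ D₂ h₁ h₂ hae
    have hsub : IsC1b (φ₁ + (-1 : ℝ) • φ₂) (D₁ + (-1 : ℝ) • D₂) := h₁.add (h₂.smul (-1))
    have hz : ∫ x, (φ₁ + (-1 : ℝ) • φ₂) x ^ 2 ∂ν = 0 := by
      rw [show (0 : ℝ) = ∫ (_ : H), (0 : ℝ) ∂ν by simp]
      refine integral_congr_ae (hae.mono fun x hx => ?_)
      simp [hx]
    have hb := hbound _ _ hsub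
    rw [hz, Real.sqrt_zero, mul_zero] at hb
    have hib : ∫ x, ⟪(D₁ + (-1 : ℝ) • D₂) x, h⟫ ∂ν
        = ∫ x, ⟪D₁ x, h⟫ ∂ν - ∫ x, ⟪D₂ x, h⟫ ∂ν := by
      rw [← integral_sub (h₁.integrable_inner ν h) (h₂.integrable_inner ν h)]
      refine integral_congr_ae (Filter.Eventually.of_forall fun x => ?_)
      simp [inner_add_left, inner_smul_left]
      ring
    rw [hib] at hb
    have := abs_nonpos_iff.mp hb
    linarith [sub_eq_zero.mp this]
  -- the subspace of classes of C¹_b functions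
  set P : E → Prop := fun f => ∃ φ Dφ, IsC1b φ Dφ ∧ (f : H → ℝ) =ᵐ[ν] φ with hP
  set S : Submodule ℝ E :=
    { carrier := {f | P f}
      add_mem' := by
        rintro f g ⟨φf, Df, hf, haef⟩ ⟨φg, Dg, hg, haeg⟩
        exact ⟨φf + φg, Df + Dg, hf.add hg,
          (Lp.coeFn_add f g).trans (haef.add haeg)⟩
      zero_mem' := ⟨0, 0, isC1b_zero, by simpa using Lp.coeFn_zero (E := ℝ) 2 ν⟩
      smul_mem' := by
        rintro c f ⟨φf, Df, hf, haef⟩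
        exact ⟨c • φf, c • Df, hf.smul c,
          (Lp.coeFn_smul c f).trans (haef.mono fun x hx => by simp [hx])⟩ } with hS
  -- the functional
  set ℓfun : E → ℝ := fun f =>
    if hf : P f then ∫ x, ⟪hf.choose_spec.choose x, h⟫ ∂ν else 0 with hℓfun
  have hℓ : ∀ (f : E) (φ : H → ℝ) (Dφ : H → H), IsC1b φ Dφ → (f : H → ℝ) =ᵐ[ν] φ →
      ℓfun f = ∫ x, ⟪Dφ x, h⟫ ∂ν := by
    intro f φ Dφ hφ hae
    have hf : P f := ⟨φ, Dφ, hφ, hae⟩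
    obtain ⟨hc1, hc2⟩ := hf.choose_spec.choose_spec
    rw [hℓfun]
    simp only [dif_pos hf]
    exact hkey _ _ _ _ hc1 hφ (hc2.symm.trans hae)
  have hℓbound : ∀ f : S, ‖ℓfun (f : E)‖ ≤ C * ‖(f : E)‖ := by
    rintro ⟨f, φ, Dφ, hφ, hae⟩
    rw [hℓ f φ Dφ hφ hae]
    have : ‖f‖ = Real.sqrt (∫ x, φ x ^ 2 ∂ν) := by
      rw [hnorm f]
      congr 1
      exact integral_congr_ae (hae.mono fun x hx => by simp [hx])
    rw [Real.norm_eq_abs, this]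
    exact hbound φ Dφ hφ
  set ℓ : S →ₗ[ℝ] ℝ :=
    { toFun := fun f => ℓfun (f : E)
      map_add' := by
        rintro ⟨f, φf, Df, hf, haef⟩ ⟨g, φg, Dg, hg, haeg⟩
        have h1 : ((f + g : E) : H → ℝ) =ᵐ[ν] φf + φg :=
          (Lp.coeFn_add f g).trans (haef.add haeg)
        show ℓfun ((f + g : E)) = ℓfun f + ℓfun g
        rw [hℓ (f + g) (φf + φg) (Df + Dg) (hf.add hg) h1, hℓ f φf Df hf haef,
          hℓ g φg Dg hg haeg,
          ← integral_add (hf.integrable_inner ν h) (hg.integrable_inner ν h)]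
        refine integral_congr_ae (Filter.Eventually.of_forall fun x => ?_)
        simp [inner_add_left]
      map_smul' := by
        rintro c ⟨f, φf, Df, hf, haef⟩
        have h1 : ((c • f : E) : H → ℝ) =ᵐ[ν] c • φf :=
          (Lp.coeFn_smul c f).trans (haef.mono fun x hx => by simp [hx])
        show ℓfun ((c • f : E)) = c * ℓfun f
        rw [hℓ (c • f) (c • φf) (c • Df) (hf.smul c) h1, hℓ f φf Df hf haef,
          ← smul_eq_mul, ← integral_smul]
        refine integral_congr_ae (Filter.Eventually.of_forall fun x => ?_)
        simp [inner_smul_left] } with hℓdef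
  set ℓc : S →L[ℝ] ℝ := LinearMap.mkContinuous ℓ C hℓbound with hℓc
  have hℓcnorm : ‖ℓc‖ ≤ C := LinearMap.mkContinuous_norm_le ℓ hC hℓbound
  obtain ⟨g, hg_ext, hg_norm⟩ := exists_extension_norm_eq S ℓc
  set v' : E := (InnerProductSpace.toDual ℝ E).symm g with hv'
  have hv'_apply : ∀ f : E, ⟪v', f⟫ = g f := fun f =>
    InnerProductSpace.toDual_symm_apply
  have hv'_norm : ‖v'‖ = ‖g‖ := LinearIsometryEquiv.norm_map _ g
  refine ⟨(v' : H → ℝ), Lp.memLp v', ?_, ?_⟩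
  · rw [← hnorm v', hv'_norm, hg_norm]; exact hℓcnorm
  · intro φ Dφ hφ
    have hmem : MemLp φ 2 ν := hφ.memℒp ν
    set f : E := hmem.toLp φ with hf
    have hae : (f : H → ℝ) =ᵐ[ν] φ := hmem.coeFn_toLp
    have hfS : f ∈ S := ⟨φ, Dφ, hφ, hae⟩
    have h1 : ∫ x, ⟪Dφ x, h⟫ ∂ν = ℓc ⟨f, hfS⟩ := (hℓ f φ Dφ hφ hae).symm
    rw [h1, ← hg_ext ⟨f, hfS⟩, ← hv'_apply f, L2.inner_def]
    refine integral_congr_ae ?_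
    filter_upwards [hae] with x hx
    simp [RCLike.inner_apply, hx, mul_comm]
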